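/- The conditional empirical entropy is not a length function: if |A| ≥ 2, then for all integers n > k ≥ 0, Σ_{y ∈ Aⁿ} 2^{−n·H_k(y)} ≥ 2, so Kraft's inequality fails for the codeword-length assignment y ↦ n·H_k(y). -/
import Mathlib


/-- The `(k+1)`-th order empirical count `m_{a,b}(y)`: the fraction of positions
`i` of `y` (indices extended cyclically) whose preceding `k`-context is `b` and
whose symbol is `a`. -/
noncomputable def empCount {A : Type*} [Fintype A] [DecidableEq A] (n k : ℕ)
    (y : Fin n → A) (a : A) (b : Fin k → A) : ℝ :=
  ((Finset.univ.filter fun i : Fin n =>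
      y i = a ∧ ∀ j : Fin k,
        y ⟨(i.val + (n - (k - j.val) % n)) % n, Nat.mod_lt _ i.pos⟩ = b j).card : ℝ) / n

/-- The conditional empirical entropy `H_k(y)` of order `k` (base-2 logarithms,
with the convention `0·log 0 = 0`): the conditional Shannon entropy
`H(Y_{k+1} | Y_1,…,Y_k)` of a random vector distributed according to the
empirical counts of `y`. -/
noncomputable def condEmpEntropy {A : Type*} [Fintype A] [DecidableEq A]
    (n k : ℕ) (y : Fin n → A) : ℝ :=
  -∑ b : Fin k → A, ∑ a : A,
      empCount n k y a b *
        Real.logb 2 (empCount n k y a b / ∑ a' : A, empCount n k y a' b)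

lemma empCount_const {A : Type*} [Fintype A] [DecidableEq A] (n k : ℕ)
    (hn : 0 < n) (a a' : A) (b : Fin k → A) :
    empCount n k (fun _ => a) a' b =
      if a = a' ∧ ∀ j, a = b j then 1 else 0 := by
  unfold empCount
  by_cases h : a = a' ∧ ∀ j, a = b j
  · rw [if_pos h]
    have he : (Finset.univ.filter fun i : Fin n =>
        (fun _ : Fin n => a) i = a' ∧ ∀ j : Fin k,
          (fun _ : Fin n => a) ⟨(i.val + (n - (k - j.val) % n)) % n,
            Nat.mod_lt _ i.pos⟩ = b j) = Finset.univ := by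
      apply Finset.filter_true_of_mem
      intro i _
      exact ⟨h.1, fun j => h.2 j⟩
    rw [he, Finset.card_univ, Fintype.card_fin]
    field_simp
  · rw [if_neg h]
    have he : (Finset.univ.filter fun i : Fin n =>
        (fun _ : Fin n => a) i = a' ∧ ∀ j : Fin k,
          (fun _ : Fin n => a) ⟨(i.val + (n - (k - j.val) % n)) % n,
            Nat.mod_lt _ i.pos⟩ = b j) = ∅ := by
      apply Finset.filter_false_of_mem
      intro i _ hc
      exact h ⟨hc.1, fun j => hc.2 j⟩
    rw [he]
    simp

lemma condEmpEntropy_const {A : Type*} [Fintype A] [DecidableEq A] (n k : ℕ)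
    (hn : 0 < n) (a : A) : condEmpEntropy n k (fun _ => a) = 0 := by
  unfold condEmpEntropy
  rw [neg_eq_zero]
  apply Finset.sum_eq_zero
  intro b _
  apply Finset.sum_eq_zero
  intro a' _
  rw [empCount_const n k hn a a' b]
  by_cases h : a = a' ∧ ∀ j, a = b j
  · rw [if_pos h]
    have hsum : (∑ a'' : A, empCount n k (fun _ => a) a'' b) = 1 := by
      have key : ∀ a'' : A, empCount n k (fun _ => a) a'' b =
          if a'' = a then 1 else 0 := by
        intro a''
        rw [empCount_const n k hn a a'' b]
        by_cases h1 : a'' = a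
        · rw [if_pos ⟨h1.symm, h.2⟩, if_pos h1]
        · rw [if_neg (fun hc => h1 hc.1.symm), if_neg h1]
      rw [Finset.sum_congr rfl (fun a'' _ => key a'')]
      simp
    rw [hsum]
    simp
  · rw [if_neg h]
    simp

/-- The conditional empirical entropy is not a length function: Kraft's
inequality fails for the codeword-length assignment `y ↦ n·H_k(y)`, since
`Σ_{y∈Aⁿ} 2^{−n·H_k(y)} ≥ 2` whenever `|A| ≥ 2`. -/
theorem kraft_fails_for_condEmpEntropy {A : Type*} [Fintype A] [DecidableEq A]
    (hA : 2 ≤ Fintype.card A) (n k : ℕ) (hk : k < n) :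
    (2 : ℝ) ≤ ∑ y : Fin n → A, (2 : ℝ) ^ (-(n : ℝ) * condEmpEntropy n k y) := by
  have hn : 0 < n := Nat.lt_of_le_of_lt (Nat.zero_le k) hk
  set s : Finset (Fin n → A) := Finset.univ.image (fun a : A => (fun _ : Fin n => a))
  have hsub : s ⊆ Finset.univ := Finset.subset_univ s
  have hinj : Function.Injective (fun a : A => (fun _ : Fin n => a)) := by
    intro a b h
    exact congrFun h ⟨0, hn⟩
  have hsum_s : ∑ y ∈ s, (2 : ℝ) ^ (-(n : ℝ) * condEmpEntropy n k y)
      = (Fintype.card A : ℝ) := by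
    rw [Finset.sum_image (fun a _ b _ h => hinj h)]
    have : ∀ a : A, (2 : ℝ) ^ (-(n : ℝ) * condEmpEntropy n k (fun _ => a)) = 1 := by
      intro a
      rw [condEmpEntropy_const n k hn a]
      simp
    rw [Finset.sum_congr rfl (fun a _ => this a)]
    simp
  calc (2 : ℝ) ≤ (Fintype.card A : ℝ) := by exact_mod_cast hA
    _ = ∑ y ∈ s, (2 : ℝ) ^ (-(n : ℝ) * condEmpEntropy n k y) := hsum_s.symm
    _ ≤ ∑ y : Fin n → A, (2 : ℝ) ^ (-(n : ℝ) * condEmpEntropy n k y) := by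
        apply Finset.sum_le_sum_of_subset_of_nonneg hsub
        intro y _ _
        positivity
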